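/- Let V be a finite-dimensional complex inner product space equipped with linear operators Q⁺, Q⁻ (odd) satisfying Q⁺∘Q⁺ = 0, Q⁻∘Q⁻ = 0, Q⁺∘Q⁻ + Q⁻∘Q⁺ = 0, and such that the adjoints satisfy (Q⁺)†∘Q⁻ + Q⁻∘(Q⁺)† = 0, (Q⁻)†∘Q⁺ + Q⁺∘(Q⁻)† = 0, and Q⁺∘(Q⁺)† + (Q⁺)†∘Q⁺ = Q⁻∘(Q⁻)† + (Q⁻)†∘Q⁻ =: Δ. Then V decomposes as the orthogonal direct sum V = ker Δ ⊕ im Q⁺ ⊕ im (Q⁺)†, and also V = ker Δ ⊕ im Q⁻ ⊕ im (Q⁻)†. -/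

import Mathlib

open LinearMap (adjoint)

section Aux

variable {V : Type*} [NormedAddCommGroup V] [InnerProductSpace ℂ V]
    [FiniteDimensional ℂ V]

private lemma ker_delta_aux (Q : V →ₗ[ℂ] V) (Δ : V →ₗ[ℂ] V)
    (hΔ : Q ∘ₗ adjoint Q + adjoint Q ∘ₗ Q = Δ)
    {x : V} (hx : Δ x = 0) : Q x = 0 ∧ adjoint Q x = 0 := by
  have e1 : (inner ℂ x (Q (adjoint Q x)) : ℂ) = inner ℂ (adjoint Q x) (adjoint Q x) :=
    (LinearMap.adjoint_inner_left Q _ _).symm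
  have e2 : (inner ℂ x (adjoint Q (Q x)) : ℂ) = inner ℂ (Q x) (Q x) :=
    LinearMap.adjoint_inner_right Q _ _
  have h : (inner ℂ x (Δ x) : ℂ) = (‖Q x‖ : ℂ) ^ 2 + (‖adjoint Q x‖ : ℂ) ^ 2 := by
    rw [← hΔ]
    simp only [LinearMap.add_apply, LinearMap.comp_apply, inner_add_right, e1, e2,
      inner_self_eq_norm_sq_to_K]
    exact add_comm _ _
  rw [hx, inner_zero_right] at h
  have h' : (‖Q x‖ : ℝ) ^ 2 + (‖adjoint Q x‖ : ℝ) ^ 2 = 0 := by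
    exact_mod_cast h.symm
  have h1 : ‖Q x‖ = 0 ∧ ‖adjoint Q x‖ = 0 := by
    constructor <;> nlinarith [sq_nonneg ‖Q x‖, sq_nonneg ‖adjoint Q x‖,
      norm_nonneg (Q x), norm_nonneg (adjoint Q x)]
  exact ⟨norm_eq_zero.mp h1.1, norm_eq_zero.mp h1.2⟩

private lemma hodge_aux (Q : V →ₗ[ℂ] V) (hQ : Q ∘ₗ Q = 0) (Δ : V →ₗ[ℂ] V)
    (hΔ : Q ∘ₗ adjoint Q + adjoint Q ∘ₗ Q = Δ) :
    (∀ x ∈ LinearMap.ker Δ, ∀ y ∈ LinearMap.range Q, (inner ℂ x y : ℂ) = 0) ∧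
      (∀ x ∈ LinearMap.ker Δ, ∀ y ∈ LinearMap.range (adjoint Q), (inner ℂ x y : ℂ) = 0) ∧
      (∀ x ∈ LinearMap.range Q, ∀ y ∈ LinearMap.range (adjoint Q), (inner ℂ x y : ℂ) = 0) ∧
      LinearMap.ker Δ ⊔ LinearMap.range Q ⊔ LinearMap.range (adjoint Q) = ⊤ := by
  have hsa : adjoint Δ = Δ := by
    rw [← hΔ]
    simp only [map_add, LinearMap.adjoint_comp, LinearMap.adjoint_adjoint]
  refine ⟨?_, ?_, ?_, ?_⟩
  · rintro x hx y ⟨z, rfl⟩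
    have hx' := ker_delta_aux Q Δ hΔ (LinearMap.mem_ker.mp hx)
    calc (inner ℂ x (Q z) : ℂ) = inner ℂ (adjoint Q x) z :=
          (LinearMap.adjoint_inner_left Q _ _).symm
      _ = 0 := by rw [hx'.2, inner_zero_left]
  · rintro x hx y ⟨z, rfl⟩
    have hx' := ker_delta_aux Q Δ hΔ (LinearMap.mem_ker.mp hx)
    calc (inner ℂ x (adjoint Q z) : ℂ) = inner ℂ (Q x) z :=
          LinearMap.adjoint_inner_right Q _ _
      _ = 0 := by rw [hx'.1, inner_zero_left]
  · rintro x ⟨a, rfl⟩ y ⟨b, rfl⟩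
    have hQQa : Q (Q a) = 0 := by
      have := congrArg (fun f => f a) hQ
      simpa using this
    calc (inner ℂ (Q a) (adjoint Q b) : ℂ) = inner ℂ (Q (Q a)) b :=
          LinearMap.adjoint_inner_right Q _ _
      _ = 0 := by rw [hQQa, inner_zero_left]
  · have hker : LinearMap.ker Δ = (LinearMap.range Δ)ᗮ := by
      ext x
      constructor
      · intro hx
        rw [Submodule.mem_orthogonal]
        rintro u ⟨z, rfl⟩
        calc (inner ℂ (Δ z) x : ℂ) = inner ℂ z (Δ x) := by
              conv_lhs => rw [← hsa]
              exact LinearMap.adjoint_inner_left Δ _ _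
          _ = 0 := by rw [LinearMap.mem_ker.mp hx, inner_zero_right]
      · intro hx
        rw [LinearMap.mem_ker, ← inner_self_eq_zero (𝕜 := ℂ)]
        have h1 : (inner ℂ (Δ (Δ x)) x : ℂ) = 0 := hx (Δ (Δ x)) ⟨Δ x, rfl⟩
        calc (inner ℂ (Δ x) (Δ x) : ℂ) = inner ℂ (adjoint Δ (Δ x)) x :=
              (LinearMap.adjoint_inner_left Δ x (Δ x)).symm
          _ = inner ℂ (Δ (Δ x)) x := by rw [hsa]
          _ = 0 := h1
    have horth : (LinearMap.ker Δ)ᗮ = LinearMap.range Δ := by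
      rw [hker, Submodule.orthogonal_orthogonal]
    have hle : LinearMap.range Δ ≤ LinearMap.range Q ⊔ LinearMap.range (adjoint Q) := by
      rintro _ ⟨x, rfl⟩
      rw [← hΔ]
      exact Submodule.add_mem_sup ⟨adjoint Q x, rfl⟩ ⟨Q x, rfl⟩
    have htop := Submodule.sup_orthogonal_of_hasOrthogonalProjection (K := LinearMap.ker Δ)
    rw [horth] at htop
    rw [sup_assoc, eq_top_iff, ← htop]
    exact sup_le_sup_left hle _

end Aux

/-- Hodge decomposition for a pair of anticommuting square-zero operators on a
finite-dimensional complex inner product space: `V` is the orthogonal direct sum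
`ker Δ ⊕ im Q⁺ ⊕ im (Q⁺)†`, and likewise for `Q⁻`. -/
theorem stmt0 {V : Type*} [NormedAddCommGroup V] [InnerProductSpace ℂ V]
    [FiniteDimensional ℂ V]
    (Qp Qm : V →ₗ[ℂ] V)
    (hQp : Qp ∘ₗ Qp = 0) (hQm : Qm ∘ₗ Qm = 0)
    (hanti : Qp ∘ₗ Qm + Qm ∘ₗ Qp = 0)
    (hadj1 : adjoint Qp ∘ₗ Qm + Qm ∘ₗ adjoint Qp = 0)
    (hadj2 : adjoint Qm ∘ₗ Qp + Qp ∘ₗ adjoint Qm = 0)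
    (Δ : V →ₗ[ℂ] V)
    (hΔp : Qp ∘ₗ adjoint Qp + adjoint Qp ∘ₗ Qp = Δ)
    (hΔm : Qm ∘ₗ adjoint Qm + adjoint Qm ∘ₗ Qm = Δ) :
    ((∀ x ∈ LinearMap.ker Δ, ∀ y ∈ LinearMap.range Qp, (inner ℂ x y : ℂ) = 0) ∧
      (∀ x ∈ LinearMap.ker Δ, ∀ y ∈ LinearMap.range (adjoint Qp), (inner ℂ x y : ℂ) = 0) ∧
      (∀ x ∈ LinearMap.range Qp, ∀ y ∈ LinearMap.range (adjoint Qp), (inner ℂ x y : ℂ) = 0) ∧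
      LinearMap.ker Δ ⊔ LinearMap.range Qp ⊔ LinearMap.range (adjoint Qp) = ⊤) ∧
    ((∀ x ∈ LinearMap.ker Δ, ∀ y ∈ LinearMap.range Qm, (inner ℂ x y : ℂ) = 0) ∧
      (∀ x ∈ LinearMap.ker Δ, ∀ y ∈ LinearMap.range (adjoint Qm), (inner ℂ x y : ℂ) = 0) ∧
      (∀ x ∈ LinearMap.range Qm, ∀ y ∈ LinearMap.range (adjoint Qm), (inner ℂ x y : ℂ) = 0) ∧
      LinearMap.ker Δ ⊔ LinearMap.range Qm ⊔ LinearMap.range (adjoint Qm) = ⊤) :=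
  ⟨hodge_aux Qp hQp Δ hΔp, hodge_aux Qm hQm Δ hΔm⟩
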